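/- For any nonnegative integers d and r ≥ 1, the complete homogeneous symmetric polynomial of degree d in r variables satisfies: h_d(x_1+1, ..., x_r+1) = ∑_{i=0}^{d} C(d+r-1, d-i) * h_i(x_1, ..., x_r). -/

import Mathlib

open Finset Finset.Nat

/-- The complete homogeneous symmetric polynomial of degree `d` in `r` variables,
evaluated at `x : Fin r → ℚ`. -/
def hsym (r d : ℕ) (x : Fin r → ℚ) : ℚ :=
  ∑ c ∈ (Fintype.piFinset fun _ : Fin r => Finset.range (d + 1)).filter
      (fun c => ∑ i, c i = d), ∏ i, x i ^ c i

lemma hsym_eq (r d : ℕ) (x : Fin r → ℚ) :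
    hsym r d x = ∑ c ∈ antidiagonalTuple r d, ∏ i, x i ^ c i := by
  unfold hsym
  apply Finset.sum_congr _ (fun _ _ => rfl)
  ext c
  simp only [mem_filter, Fintype.mem_piFinset, mem_range, mem_antidiagonalTuple]
  constructor
  · rintro ⟨-, h⟩; exact h
  · intro h
    refine ⟨fun i => ?_, h⟩
    have : c i ≤ d := h ▸ Finset.single_le_sum (fun j _ => Nat.zero_le _) (mem_univ i)
    omega

lemma choose_vandermonde (q : ℕ) : ∀ (n p : ℕ),
    ∑ ij ∈ antidiagonal n, ij.1.choose p * ij.2.choose q = (n + 1).choose (p + q + 1) := by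
  intro n
  induction n with
  | zero =>
    intro p
    have h0 : antidiagonal 0 = {((0 : ℕ), (0 : ℕ))} := rfl
    rw [h0, Finset.sum_singleton]
    rcases Nat.eq_zero_or_pos p with rfl | hp
    · rcases Nat.eq_zero_or_pos q with rfl | hq
      · simp
      · simp [Nat.choose_eq_zero_of_lt hq,
          Nat.choose_eq_zero_of_lt (show 1 < q + 1 by omega)]
    · simp [Nat.choose_eq_zero_of_lt hp,
        Nat.choose_eq_zero_of_lt (show 1 < p + q + 1 by omega)]
  | succ n ih =>
    intro p
    rw [Finset.Nat.sum_antidiagonal_succ]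
    cases p with
    | zero =>
      simp only [Nat.choose_zero_right, Nat.choose_self, one_mul]
      have := ih 0
      simp only [Nat.choose_zero_right, one_mul, Nat.zero_add] at this ⊢
      rw [this]
      rw [Nat.choose_succ_succ (n + 1) q]
    | succ p =>
      simp only [Nat.choose_succ_succ (_ + 1)]
      have h0 : Nat.choose 0 (p + 1) = 0 := Nat.choose_eq_zero_of_lt (Nat.succ_pos p)
      simp only [Nat.choose_succ_succ _ p, add_mul, Finset.sum_add_distrib, h0, zero_mul, zero_add]
      rw [ih p, ih (p + 1)]
      have e2 : p + 1 + q = p + q + 1 := by omega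
      rw [e2]

lemma key_sum (d s j m : ℕ) :
    ∑ a ∈ range (d + 1), a.choose j * (d - a + s).choose (m + s)
      = (d + s + 1).choose (j + m + s + 1) := by
  have hv := choose_vandermonde (m + s) (d + s) j
  rw [Finset.Nat.sum_antidiagonal_eq_sum_range_succ_mk] at hv
  have hsub : range (d + 1) ⊆ range (d + s + 1) := Finset.range_subset_range.2 (by omega)
  have h1 : ∑ a ∈ range (d + 1), a.choose j * (d + s - a).choose (m + s)
      = ∑ a ∈ range (d + s + 1), a.choose j * (d + s - a).choose (m + s) :=
    Finset.sum_subset hsub (fun a ha hna => by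
      rw [mem_range] at ha
      simp only [mem_range, not_lt] at hna
      rw [Nat.choose_eq_zero_of_lt (show d + s - a < m + s by omega), mul_zero])
  have h2 : ∑ a ∈ range (d + 1), a.choose j * (d - a + s).choose (m + s)
      = ∑ a ∈ range (d + 1), a.choose j * (d + s - a).choose (m + s) :=
    Finset.sum_congr rfl (fun a ha => by
      rw [mem_range] at ha
      have e : d - a + s = d + s - a := by omega
      rw [e])
  rw [h2, h1, hv]
  have e : j + (m + s) + 1 = j + m + s + 1 := by omega
  rw [e]

lemma hsym_succ (r d : ℕ) (x : Fin (r + 1) → ℚ) :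
    hsym (r + 1) d x
      = ∑ ab ∈ antidiagonal d, x 0 ^ ab.1 * hsym r ab.2 (x ∘ Fin.succ) := by
  simp only [hsym_eq, Finset.mul_sum]
  rw [← Finset.sum_sigma (antidiagonal d) (fun ab => antidiagonalTuple r ab.2)
      (fun p => x 0 ^ p.1.1 * ∏ i, (x ∘ Fin.succ) i ^ p.2 i)]
  apply Finset.sum_nbij' (i := fun c => (⟨(c 0, ∑ i, Fin.tail c i), Fin.tail c⟩ :
      Σ _ab : ℕ × ℕ, Fin r → ℕ)) (j := fun p => Fin.cons p.1.1 p.2)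
  · intro c hc
    rw [mem_antidiagonalTuple, Fin.sum_univ_succ] at hc
    simp only [Finset.mem_sigma, Finset.HasAntidiagonal.mem_antidiagonal, mem_antidiagonalTuple]
    exact ⟨hc, trivial⟩
  · rintro ⟨⟨a, b⟩, c⟩ hp
    simp only [Finset.mem_sigma, Finset.HasAntidiagonal.mem_antidiagonal, mem_antidiagonalTuple] at hp
    rw [mem_antidiagonalTuple, Fin.sum_univ_succ]
    simp only [Fin.cons_zero, Fin.cons_succ]
    rw [hp.2]
    exact hp.1
  · intro c _
    exact Fin.cons_self_tail c
  · rintro ⟨⟨a, b⟩, c⟩ hp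
    simp only [Finset.mem_sigma, Finset.HasAntidiagonal.mem_antidiagonal, mem_antidiagonalTuple] at hp
    simp [Fin.tail_cons, hp.2]
  · intro c _
    rw [Fin.prod_univ_succ]
    rfl

lemma hsym_one (d : ℕ) (x : Fin 1 → ℚ) : hsym 1 d x = x 0 ^ d := by
  rw [hsym_eq, Finset.Nat.antidiagonalTuple_one, Finset.sum_singleton]
  simp

lemma binom_ext (y : ℚ) (a d : ℕ) (h : a ≤ d) :
    (y + 1) ^ a = ∑ j ∈ range (d + 1), (a.choose j : ℚ) * y ^ j := by
  have h1 : (y + 1) ^ a = ∑ j ∈ range (a + 1), (a.choose j : ℚ) * y ^ j := by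
    rw [add_pow]
    exact Finset.sum_congr rfl fun j _ => by ring
  rw [h1]
  apply Finset.sum_subset (Finset.range_subset_range.2 (by omega))
  intro j _ hnj
  simp only [mem_range, not_lt] at hnj
  rw [Nat.choose_eq_zero_of_lt (by omega)]
  simp

lemma aux : ∀ r, ∀ d, ∀ x : Fin (r + 1) → ℚ,
    hsym (r + 1) d (fun i => x i + 1)
      = ∑ i ∈ range (d + 1), ((d + r).choose (d - i) : ℚ) * hsym (r + 1) i x := by
  intro r
  induction r with
  | zero =>
    intro d x
    show hsym 1 d (fun i => x i + 1)
      = ∑ i ∈ range (d + 1), ((d + 0).choose (d - i) : ℚ) * hsym 1 i x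
    simp only [hsym_one]
    show (x 0 + 1) ^ d = _
    rw [binom_ext (x 0) d d le_rfl]
    apply Finset.sum_congr rfl
    intro i hi
    rw [mem_range] at hi
    have e : (d + 0).choose (d - i) = d.choose i := by
      rw [Nat.add_zero, Nat.choose_symm (by omega)]
    rw [e]
  | succ r ih =>
    intro d x
    set H : ℕ → ℚ := fun m => hsym (r + 1) m (x ∘ Fin.succ) with hH
    have B2 : ∀ b, b ≤ d → hsym (r + 1) b (fun i => (x ∘ Fin.succ) i + 1)
        = ∑ m ∈ range (d + 1), ((b + r).choose (m + r) : ℚ) * H m := by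
      intro b hb
      rw [ih b (x ∘ Fin.succ)]
      have step1 : ∑ m ∈ range (b + 1), ((b + r).choose (b - m) : ℚ) * H m
          = ∑ m ∈ range (b + 1), ((b + r).choose (m + r) : ℚ) * H m := by
        apply Finset.sum_congr rfl
        intro m hm
        rw [mem_range] at hm
        have e : (b + r).choose (b - m) = (b + r).choose (m + r) := by
          have h1 : m + r = b + r - (b - m) := by omega
          rw [h1, Nat.choose_symm (by omega)]
        rw [e]
      rw [step1]
      apply Finset.sum_subset (Finset.range_subset_range.2 (by omega))
      intro m _ hnm
      simp only [mem_range, not_lt] at hnm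
      rw [Nat.choose_eq_zero_of_lt (by omega)]
      simp
    have hinner : ∀ j m : ℕ,
        (∑ ab ∈ antidiagonal d, ((ab.1.choose j : ℚ) * ((ab.2 + r).choose (m + r) : ℚ)))
          = ((d + r + 1).choose (j + m + r + 1) : ℚ) := by
      intro j m
      have keyN : (∑ ab ∈ antidiagonal d, ab.1.choose j * (ab.2 + r).choose (m + r))
          = (d + r + 1).choose (j + m + r + 1) := by
        rw [Finset.Nat.sum_antidiagonal_eq_sum_range_succ_mk]
        exact key_sum d r j m
      exact_mod_cast keyN
    have hterm : ∑ ab ∈ antidiagonal d,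
          (x 0 + 1) ^ ab.1 * hsym (r + 1) ab.2 (fun i => (x ∘ Fin.succ) i + 1)
        = ∑ ab ∈ antidiagonal d, ∑ j ∈ range (d + 1), ∑ m ∈ range (d + 1),
            ((ab.1.choose j : ℚ) * ((ab.2 + r).choose (m + r) : ℚ))
              * (x 0 ^ j * H m) := by
      apply Finset.sum_congr rfl
      intro ab hab
      rw [Finset.HasAntidiagonal.mem_antidiagonal] at hab
      rw [binom_ext (x 0) ab.1 d (by omega), B2 ab.2 (by omega), Finset.sum_mul_sum]
      apply Finset.sum_congr rfl
      intro j _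
      apply Finset.sum_congr rfl
      intro m _
      ring
    have claim2 : ∑ i ∈ range (d + 1), ∑ p ∈ antidiagonal i,
          ((d + r + 1).choose (d - i) : ℚ) * (x 0 ^ p.1 * H p.2)
        = ∑ p ∈ ((range (d + 1) ×ˢ range (d + 1)).filter fun p => p.1 + p.2 ≤ d),
            ((d + r + 1).choose (d - (p.1 + p.2)) : ℚ) * (x 0 ^ p.1 * H p.2) := by
      rw [← Finset.sum_sigma (range (d + 1)) (fun i => antidiagonal i)
          (fun q => ((d + r + 1).choose (d - q.1) : ℚ) * (x 0 ^ q.2.1 * H q.2.2))]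
      apply Finset.sum_nbij' (i := fun q => q.2) (j := fun p => ⟨p.1 + p.2, p⟩)
      · rintro ⟨i, p⟩ hq
        simp only [Finset.mem_sigma, mem_range, Finset.HasAntidiagonal.mem_antidiagonal] at hq
        simp only [Finset.mem_filter, Finset.mem_product, mem_range]
        omega
      · intro p hp
        simp only [Finset.mem_filter, Finset.mem_product, mem_range] at hp
        simp only [Finset.mem_sigma, mem_range, Finset.HasAntidiagonal.mem_antidiagonal]
        refine ⟨by omega, trivial⟩
      · rintro ⟨i, p⟩ hq
        simp only [Finset.mem_sigma, Finset.HasAntidiagonal.mem_antidiagonal] at hq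
        exact congrArg (fun n => (⟨n, p⟩ : Σ _i : ℕ, ℕ × ℕ)) hq.2
      · intro p _
        rfl
      · rintro ⟨i, p⟩ hq
        simp only [Finset.mem_sigma, Finset.HasAntidiagonal.mem_antidiagonal] at hq
        rw [hq.2]
    calc hsym (r + 1 + 1) d (fun i => x i + 1)
        = ∑ ab ∈ antidiagonal d,
            (x 0 + 1) ^ ab.1 * hsym (r + 1) ab.2 (fun i => (x ∘ Fin.succ) i + 1) := by
          rw [hsym_succ]
          rfl
      _ = ∑ ab ∈ antidiagonal d, ∑ j ∈ range (d + 1), ∑ m ∈ range (d + 1),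
            ((ab.1.choose j : ℚ) * ((ab.2 + r).choose (m + r) : ℚ))
              * (x 0 ^ j * H m) := hterm
      _ = ∑ j ∈ range (d + 1), ∑ ab ∈ antidiagonal d, ∑ m ∈ range (d + 1),
            ((ab.1.choose j : ℚ) * ((ab.2 + r).choose (m + r) : ℚ))
              * (x 0 ^ j * H m) := Finset.sum_comm
      _ = ∑ j ∈ range (d + 1), ∑ m ∈ range (d + 1), ∑ ab ∈ antidiagonal d,
            ((ab.1.choose j : ℚ) * ((ab.2 + r).choose (m + r) : ℚ))
              * (x 0 ^ j * H m) := Finset.sum_congr rfl fun j _ => Finset.sum_comm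
      _ = ∑ j ∈ range (d + 1), ∑ m ∈ range (d + 1),
            ((d + r + 1).choose (j + m + r + 1) : ℚ) * (x 0 ^ j * H m) := by
          apply Finset.sum_congr rfl
          intro j _
          apply Finset.sum_congr rfl
          intro m _
          rw [← Finset.sum_mul, hinner j m]
      _ = ∑ p ∈ (range (d + 1) ×ˢ range (d + 1)),
            ((d + r + 1).choose (p.1 + p.2 + r + 1) : ℚ) * (x 0 ^ p.1 * H p.2) := by
          rw [Finset.sum_product]
      _ = ∑ p ∈ ((range (d + 1) ×ˢ range (d + 1)).filter fun p => p.1 + p.2 ≤ d),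
            ((d + r + 1).choose (p.1 + p.2 + r + 1) : ℚ) * (x 0 ^ p.1 * H p.2) := by
          refine (Finset.sum_subset (Finset.filter_subset _ _) ?_).symm
          intro p hp hnp
          have hd : d < p.1 + p.2 := by
            by_contra hcon
            exact hnp (Finset.mem_filter.2 ⟨hp, by omega⟩)
          rw [Nat.choose_eq_zero_of_lt (by omega)]
          simp
      _ = ∑ p ∈ ((range (d + 1) ×ˢ range (d + 1)).filter fun p => p.1 + p.2 ≤ d),
            ((d + r + 1).choose (d - (p.1 + p.2)) : ℚ) * (x 0 ^ p.1 * H p.2) := by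
          apply Finset.sum_congr rfl
          intro p hp
          simp only [Finset.mem_filter] at hp
          have e : (d + r + 1).choose (p.1 + p.2 + r + 1)
              = (d + r + 1).choose (d - (p.1 + p.2)) := by
            have h1 : d - (p.1 + p.2) = d + r + 1 - (p.1 + p.2 + r + 1) := by omega
            rw [h1, Nat.choose_symm (by omega)]
          rw [e]
      _ = ∑ i ∈ range (d + 1), ∑ p ∈ antidiagonal i,
            ((d + r + 1).choose (d - i) : ℚ) * (x 0 ^ p.1 * H p.2) := claim2.symm
      _ = ∑ i ∈ range (d + 1), ((d + (r + 1)).choose (d - i) : ℚ) * hsym (r + 1 + 1) i x := by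
          apply Finset.sum_congr rfl
          intro i _
          rw [hsym_succ, Finset.mul_sum]
          apply Finset.sum_congr rfl
          intro p _
          show ((d + r + 1).choose (d - i) : ℚ) * (x 0 ^ p.1 * H p.2) = _
          rw [hH]
          ring

theorem stmt2 (r d : ℕ) (hr : 1 ≤ r) (x : Fin r → ℚ) :
    hsym r d (fun i => x i + 1)
      = ∑ i ∈ Finset.range (d + 1), ((d + r - 1).choose (d - i) : ℚ) * hsym r i x := by
  obtain ⟨s, rfl⟩ : ∃ s, r = s + 1 := ⟨r - 1, by omega⟩
  have e : d + (s + 1) - 1 = d + s := by omega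
  rw [e]
  exact aux s d x
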